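/- Let N be a complete nest and M a weakly closed subspace of B(H). The map φ(P) = ⋁{Q ∈ N : ∃ R ∈ N, R < P, Q B(H) R^⊥ ⊆ M} is left order continuous: for every subset X of N, φ(⋁X) = ⋁ φ(X) (with the convention that the supremum of the empty set is 0). -/

import Mathlib

/-- The order on orthogonal projections: `P ≤ Q` encoded as `P*Q = P ∧ Q*P = P`. -/
def opLe {H : Type} [NormedAddCommGroup H] [InnerProductSpace ℂ H]
    (P Q : H →L[ℂ] H) : Prop := P * Q = P ∧ Q * P = P

/-- Strict order on projections. -/
def opLt {H : Type} [NormedAddCommGroup H] [InnerProductSpace ℂ H]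
    (P Q : H →L[ℂ] H) : Prop := opLe P Q ∧ P ≠ Q

/-- A complete nest: a totally ordered complete sublattice of the lattice of orthogonal
projections on `H`, containing `0` and `1`.  Completeness means that every subset has a
least upper bound and a greatest lower bound (computed in the full projection lattice)
belonging to the nest. -/
structure IsNest {H : Type} [NormedAddCommGroup H] [InnerProductSpace ℂ H] [CompleteSpace H]
    (N : Set (H →L[ℂ] H)) : Prop where
  proj : ∀ P ∈ N, IsSelfAdjoint P ∧ IsIdempotentElem P
  zero_mem : (0 : H →L[ℂ] H) ∈ N
  one_mem : (1 : H →L[ℂ] H) ∈ N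
  total : ∀ P ∈ N, ∀ Q ∈ N, opLe P Q ∨ opLe Q P
  complete_sup : ∀ S ⊆ N, ∃ B ∈ N, (∀ P ∈ S, opLe P B) ∧
    ∀ C : H →L[ℂ] H, IsSelfAdjoint C → IsIdempotentElem C → (∀ P ∈ S, opLe P C) → opLe B C
  complete_inf : ∀ S ⊆ N, ∃ B ∈ N, (∀ P ∈ S, opLe B P) ∧
    ∀ C : H →L[ℂ] H, IsSelfAdjoint C → IsIdempotentElem C → (∀ P ∈ S, opLe C P) → opLe C B

/-- `B` is the supremum, taken in the nest `N`, of the subset `S` of `N`. -/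
def IsNestSup {H : Type} [NormedAddCommGroup H] [InnerProductSpace ℂ H]
    (N S : Set (H →L[ℂ] H)) (B : H →L[ℂ] H) : Prop :=
  B ∈ N ∧ (∀ P ∈ S, opLe P B) ∧ ∀ C ∈ N, (∀ P ∈ S, opLe P C) → opLe B C

/-- `B` is the infimum, taken in the nest `N`, of the subset `S` of `N`. -/
def IsNestInf {H : Type} [NormedAddCommGroup H] [InnerProductSpace ℂ H]
    (N S : Set (H →L[ℂ] H)) (B : H →L[ℂ] H) : Prop :=
  B ∈ N ∧ (∀ P ∈ S, opLe B P) ∧ ∀ C ∈ N, (∀ P ∈ S, opLe C P) → opLe C B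

/-- The nest algebra `T(N)` of a nest `N`: all `T` with `P^⊥ T P = 0` for all `P ∈ N`. -/
def nestAlg {H : Type} [NormedAddCommGroup H] [InnerProductSpace ℂ H]
    (N : Set (H →L[ℂ] H)) : Set (H →L[ℂ] H) :=
  {T | ∀ P ∈ N, (1 - P) * T * P = 0}

/-- A subset of `B(H)` is weakly closed if it is closed in the weak operator topology. -/
def WClosed {H : Type} [NormedAddCommGroup H] [InnerProductSpace ℂ H] [CompleteSpace H]
    (M : Set (H →L[ℂ] H)) : Prop :=
  IsClosed ((ContinuousLinearMapWOT.ofCLM : (H →L[ℂ] H) → H →WOT[ℂ] H) '' M)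

/-- The closure of a subset of `B(H)` in the weak operator topology. -/
def wClosure {H : Type} [NormedAddCommGroup H] [InnerProductSpace ℂ H] [CompleteSpace H]
    (S : Set (H →L[ℂ] H)) : Set (H →L[ℂ] H) :=
  (ContinuousLinearMapWOT.ofCLM : (H →L[ℂ] H) → H →WOT[ℂ] H) ⁻¹' (closure ((ContinuousLinearMapWOT.ofCLM : (H →L[ℂ] H) → H →WOT[ℂ] H) '' S))

/-- The rank-one operator `x ⊗ y : z ↦ ⟨z,x⟩y` (inner product linear in its first variable,
i.e. `⟨z,x⟩ = ⟪x,z⟫` in Mathlib's convention). -/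
noncomputable def rankOne {H : Type} [NormedAddCommGroup H] [InnerProductSpace ℂ H]
    (x y : H) : H →L[ℂ] H :=
  (innerSL ℂ x).smulRight y
/-- The set `{Q ∈ N : ∃ R ∈ N, R < P, Q B(H) R^⊥ ⊆ M}` whose supremum defines `φ(P)`. -/
def phiSet {H : Type} [NormedAddCommGroup H] [InnerProductSpace ℂ H] [CompleteSpace H]
    (N : Set (H →L[ℂ] H)) (M : Submodule ℂ (H →L[ℂ] H)) (P : H →L[ℂ] H) :
    Set (H →L[ℂ] H) :=
  {Q | Q ∈ N ∧ ∃ R ∈ N, opLt R P ∧ ∀ A : H →L[ℂ] H, Q * A * (1 - R) ∈ M}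
lemma opLe_trans {H : Type} [NormedAddCommGroup H] [InnerProductSpace ℂ H]
    {P Q R : H →L[ℂ] H} (h1 : opLe P Q) (h2 : opLe Q R) : opLe P R := by
  constructor
  · calc P * R = (P * Q) * R := by rw [h1.1]
    _ = P * (Q * R) := by rw [mul_assoc]
    _ = P * Q := by rw [h2.1]
    _ = P := h1.1
  · calc R * P = R * (Q * P) := by rw [h1.2]
    _ = (R * Q) * P := by rw [mul_assoc]
    _ = Q * P := by rw [h2.2]
    _ = P := h1.2

lemma opLe_antisymm {H : Type} [NormedAddCommGroup H] [InnerProductSpace ℂ H]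
    {P Q : H →L[ℂ] H} (h1 : opLe P Q) (h2 : opLe Q P) : P = Q := by
  calc P = Q * P := h1.2.symm
  _ = Q := h2.1

/-- The map `φ` is left order continuous: for every subset `X` of `N`,
`φ(⋁X) = ⋁φ(X)` (suprema taken in the complete lattice `N`). -/
theorem phi_left_order_continuous
    {H : Type} [NormedAddCommGroup H] [InnerProductSpace ℂ H] [CompleteSpace H]
    (N : Set (H →L[ℂ] H)) (hN : IsNest N) (M : Submodule ℂ (H →L[ℂ] H))
    (hM : WClosed (M : Set (H →L[ℂ] H)))
    (φ : (H →L[ℂ] H) → (H →L[ℂ] H))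
    (hφ : ∀ P ∈ N, IsNestSup N (phiSet N M P) (φ P))
    (X : Set (H →L[ℂ] H)) (hX : X ⊆ N)
    (sX sφ : H →L[ℂ] H)
    (hsX : IsNestSup N X sX) (hsφ : IsNestSup N (φ '' X) sφ) :
    φ sX = sφ := by
  obtain ⟨hsXmem, hsXub, hsXlub⟩ := hsX
  obtain ⟨hφsXmem, hφsXub, hφsXlub⟩ := hφ sX hsXmem
  obtain ⟨hsφmem, hsφub, hsφlub⟩ := hsφ
  -- direction 1 : φ sX ≤ sφ
  have h1 : opLe (φ sX) sφ := by
    apply hφsXlub sφ hsφmem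
    rintro Q ⟨hQN, R, hRN, ⟨hRle, hRne⟩, hRM⟩
    -- find P ∈ X with ¬ opLe P R
    have hex : ∃ P ∈ X, ¬ opLe P R := by
      by_contra hc
      push_neg at hc
      exact hRne (opLe_antisymm hRle (hsXlub R hRN hc))
    obtain ⟨P, hPX, hPR⟩ := hex
    have hRP : opLe R P := (hN.total P (hX hPX) R hRN).resolve_left hPR
    have hRneP : R ≠ P := by
      rintro rfl
      exact hPR ⟨(hN.proj R hRN).2, (hN.proj R hRN).2⟩
    have hQφP : opLe Q (φ P) :=
      (hφ P (hX hPX)).2.1 Q ⟨hQN, R, hRN, ⟨hRP, hRneP⟩, hRM⟩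
    exact opLe_trans hQφP (hsφub (φ P) ⟨P, hPX, rfl⟩)
  -- direction 2 : sφ ≤ φ sX
  have h2 : opLe sφ (φ sX) := by
    apply hsφlub (φ sX) hφsXmem
    rintro _ ⟨P, hPX, rfl⟩
    apply (hφ P (hX hPX)).2.2 (φ sX) hφsXmem
    rintro Q ⟨hQN, R, hRN, ⟨hRle, hRne⟩, hRM⟩
    refine hφsXub Q ⟨hQN, R, hRN, ⟨opLe_trans hRle (hsXub P hPX), ?_⟩, hRM⟩
    rintro rfl
    exact hRne (opLe_antisymm hRle (hsXub P hPX))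
  exact opLe_antisymm h1 h2
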